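/- Let k ≥ 2 be an integer, a = π/k, and let W be a complex-valued integrable function on (0,π) such that ∑_{j=0}^{⌊(k−1)/2⌋} W(2ja + t) + ∑_{j=1}^{⌊k/2⌋} W(2ja − t) = 0 for almost every t ∈ (0,a). Then ∫_0^π W(t)·cos(k·n·t) dt = 0 for every integer n ≥ 0. -/

import Mathlib

open MeasureTheory

lemma sum_range_even_odd {M : Type*} [AddCommMonoid M] (g : ℕ → M) :
    ∀ k : ℕ, 1 ≤ k → ∑ j ∈ Finset.range k, g j =
      ∑ m ∈ Finset.range ((k - 1) / 2 + 1), g (2 * m) +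
      ∑ m ∈ Finset.Icc 1 (k / 2), g (2 * m - 1) := by
  intro k
  induction k with
  | zero => omega
  | succ k ih =>
    intro _
    rcases Nat.eq_zero_or_pos k with hk0 | hk1
    · subst hk0; simp
    rw [Finset.sum_range_succ, ih hk1]
    rcases Nat.even_or_odd k with ⟨t, ht⟩ | ⟨t, ht⟩
    · have e1 : (k - 1) / 2 + 1 = t := by omega
      have e2 : (k + 1 - 1) / 2 + 1 = t + 1 := by omega
      have e3 : (k + 1) / 2 = k / 2 := by omega
      rw [e1, e2, e3, Finset.sum_range_succ, show 2 * t = k by omega]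
      abel
    · have e1 : (k + 1 - 1) / 2 + 1 = (k - 1) / 2 + 1 := by omega
      have e2 : (k + 1) / 2 = k / 2 + 1 := by omega
      have e3 : 1 ≤ k / 2 + 1 := by omega
      rw [e1, e2, Finset.sum_Icc_succ_top e3, show 2 * (k / 2 + 1) - 1 = k by omega]
      abel

theorem integral_cos_eq_zero_of_degeneration (k : ℕ) (hk : 2 ≤ k)
    (W : ℝ → ℂ) (hW : IntegrableOn W (Set.Ioo 0 Real.pi))
    (hdeg : ∀ᵐ t ∂(volume.restrict (Set.Ioo (0:ℝ) (Real.pi / k))),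
      ∑ j ∈ Finset.range ((k - 1) / 2 + 1), W (2 * j * (Real.pi / k) + t) +
        ∑ j ∈ Finset.Icc 1 (k / 2), W (2 * j * (Real.pi / k) - t) = 0) :
    ∀ n : ℕ, ∫ t in (0:ℝ)..Real.pi, W t * Complex.cos ((k : ℂ) * n * t) = 0 := by
  intro n
  set a : ℝ := Real.pi / k with ha
  have hkR : (0:ℝ) < (k:ℝ) := by positivity
  have hapos : 0 < a := div_pos Real.pi_pos hkR
  have hka : (k:ℝ) * a = Real.pi := by
    rw [ha]; field_simp
  have hπC : (k:ℂ) * (a:ℂ) = (Real.pi : ℂ) := by exact_mod_cast congrArg Complex.ofReal hka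
  set f : ℝ → ℂ := fun t => W t * Complex.cos ((k : ℂ) * n * t) with hfdef
  -- cosine identities
  have hcos1 : ∀ (m : ℕ) (t : ℝ),
      Complex.cos ((k:ℂ) * n * ((t + 2 * m * a : ℝ) : ℂ)) = Complex.cos ((k:ℂ) * n * (t:ℂ)) := by
    intro m t
    have harg : ((k:ℂ) * n * ((t + 2 * m * a : ℝ) : ℂ))
        = (k:ℂ) * n * (t:ℂ) + ((m * n : ℤ) : ℂ) * (2 * (Real.pi : ℂ)) := by
      push_cast
      linear_combination (2 * (m:ℂ) * (n:ℂ)) * hπC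
    rw [harg, Complex.cos_add_int_mul_two_pi]
  have hcos2 : ∀ (m : ℕ) (t : ℝ),
      Complex.cos ((k:ℂ) * n * ((2 * m * a - t : ℝ) : ℂ)) = Complex.cos ((k:ℂ) * n * (t:ℂ)) := by
    intro m t
    have harg : ((k:ℂ) * n * ((2 * m * a - t : ℝ) : ℂ))
        = -((k:ℂ) * n * (t:ℂ)) + ((m * n : ℤ) : ℂ) * (2 * (Real.pi : ℂ)) := by
      push_cast
      linear_combination (2 * (m:ℂ) * (n:ℂ)) * hπC
    rw [harg, Complex.cos_add_int_mul_two_pi, Complex.cos_neg]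
  -- integrability of f
  have hWIoc : IntegrableOn W (Set.Ioc 0 Real.pi) := by
    rwa [IntegrableOn, ← Measure.restrict_congr_set Ioo_ae_eq_Ioc]
  have hmeas : AEStronglyMeasurable (fun t : ℝ => Complex.cos ((k:ℂ) * n * t))
      (volume.restrict (Set.Ioc 0 Real.pi)) := by
    apply Continuous.aestronglyMeasurable
    exact Complex.continuous_cos.comp (continuous_const.mul Complex.continuous_ofReal)
  have hbdd : ∀ t : ℝ, ‖Complex.cos ((k:ℂ) * n * t)‖ ≤ 1 := by
    intro t
    have : ((k:ℂ) * n * (t:ℂ)) = ((k * n * t : ℝ) : ℂ) := by push_cast; ring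
    rw [this, ← Complex.ofReal_cos, Complex.norm_real, Real.norm_eq_abs]
    exact Real.abs_cos_le_one _
  have hfInt : IntegrableOn f (Set.Ioc 0 Real.pi) := by
    have h1 : IntegrableOn (fun t : ℝ => Complex.cos ((k:ℂ) * n * t) * W t) (Set.Ioc 0 Real.pi) :=
      Integrable.bdd_mul hWIoc hmeas (Filter.Eventually.of_forall hbdd)
    exact h1.congr (Filter.Eventually.of_forall fun t => mul_comm _ _)
  have hii : ∀ c d : ℝ, 0 ≤ c → d ≤ Real.pi → c ≤ d → IntervalIntegrable f volume c d := by
    intro c d h0 hπ hcd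
    rw [intervalIntegrable_iff_integrableOn_Ioc_of_le hcd]
    exact hfInt.mono_set (Set.Ioc_subset_Ioc h0 hπ)
  -- split into k adjacent intervals
  have hsplit : (∫ t in (0:ℝ)..Real.pi, f t)
      = ∑ j ∈ Finset.range k, ∫ t in ((j:ℝ) * a)..((j:ℝ) * a + a), f t := by
    have hint : ∀ i, i < k → IntervalIntegrable f volume ((i:ℝ) * a) (((i:ℕ)+1:ℕ) * a) := by
      intro i hi
      apply hii
      · positivity
      · push_cast
        calc ((i:ℝ) + 1) * a ≤ (k:ℝ) * a := by
              apply mul_le_mul_of_nonneg_right _ hapos.le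
              exact_mod_cast Nat.succ_le_of_lt hi
          _ = Real.pi := hka
      · push_cast
        nlinarith [hapos]
    have := intervalIntegral.sum_integral_adjacent_intervals
      (a := fun i : ℕ => (i:ℝ) * a) (f := f) (μ := volume) (n := k) hint
    beta_reduce at this
    rw [Nat.cast_zero, zero_mul, hka] at this
    rw [← this]
    apply Finset.sum_congr rfl
    intro j _
    congr 1
    push_cast
    ring
  rw [hsplit, sum_range_even_odd (fun j => ∫ t in ((j:ℝ) * a)..((j:ℝ) * a + a), f t) k
    (by omega)]
  -- transform even terms
  have heven : ∀ m : ℕ, (∫ t in (((2*m : ℕ):ℝ) * a)..(((2*m : ℕ):ℝ) * a + a), f t)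
      = ∫ s in (0:ℝ)..a, f (s + 2 * m * a) := by
    intro m
    rw [intervalIntegral.integral_comp_add_right f (2 * m * a)]
    congr 1 <;> push_cast <;> ring
  have hodd : ∀ m : ℕ, 1 ≤ m →
      (∫ t in (((2*m-1 : ℕ):ℝ) * a)..(((2*m-1 : ℕ):ℝ) * a + a), f t)
      = ∫ s in (0:ℝ)..a, f (2 * m * a - s) := by
    intro m hm
    rw [intervalIntegral.integral_comp_sub_left f (2 * m * a)]
    have : ((2*m-1 : ℕ):ℝ) = 2 * (m:ℝ) - 1 := by
      have : (1:ℕ) ≤ 2 * m := by omega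
      push_cast [Nat.cast_sub this]
      ring
    congr 1 <;> rw [this] <;> ring
  rw [Finset.sum_congr rfl (fun m _ => heven m),
    Finset.sum_congr rfl (fun m hm => hodd m (Finset.mem_Icc.mp hm).1)]
  -- integrability of the translated functions
  have hIe : ∀ m ∈ Finset.range ((k - 1) / 2 + 1),
      IntervalIntegrable (fun s => f (s + 2 * m * a)) volume 0 a := by
    intro m hm
    have hmk : 2 * m + 1 ≤ k := by
      have := Finset.mem_range.mp hm; omega
    have base : IntervalIntegrable f volume (2 * m * a) (2 * m * a + a) := by
      apply hii
      · positivity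
      · calc 2 * (m:ℝ) * a + a = (2 * m + 1 : ℕ) * a := by push_cast; ring
          _ ≤ (k:ℝ) * a := by
              apply mul_le_mul_of_nonneg_right _ hapos.le
              exact_mod_cast hmk
          _ = Real.pi := hka
      · linarith [hapos]
    have := base.comp_add_right (2 * m * a)
    simpa using this
  have hIo : ∀ m ∈ Finset.Icc 1 (k / 2),
      IntervalIntegrable (fun s => f (2 * m * a - s)) volume 0 a := by
    intro m hm
    obtain ⟨hm1, hm2⟩ := Finset.mem_Icc.mp hm
    have hmk : 2 * m ≤ k := by omega
    have base : IntervalIntegrable f volume (2 * m * a - a) (2 * m * a) := by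
      apply hii
      · have h1 : (1:ℝ) ≤ (m:ℝ) := by exact_mod_cast hm1
        nlinarith [hapos]
      · calc 2 * (m:ℝ) * a = (2 * m : ℕ) * a := by push_cast; ring
          _ ≤ (k:ℝ) * a := by
              apply mul_le_mul_of_nonneg_right _ hapos.le
              exact_mod_cast hmk
          _ = Real.pi := hka
      · linarith [hapos]
    have h2 := base.comp_sub_left (2 * m * a)
    have h3 : IntervalIntegrable (fun x => f (2 * m * a - x)) volume
        (2 * m * a - (2 * m * a - a)) (2 * m * a - 2 * m * a) := h2
    rw [show (2 * (m:ℝ) * a - (2 * m * a - a)) = a by ring,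
      show (2 * (m:ℝ) * a - 2 * m * a) = 0 by ring] at h3
    exact h3.symm
  rw [← intervalIntegral.integral_finset_sum hIe, ← intervalIntegral.integral_finset_sum hIo]
  have hA : IntervalIntegrable
      (fun x => ∑ m ∈ Finset.range ((k - 1) / 2 + 1), f (x + 2 * m * a)) volume 0 a := by
    have h := IntervalIntegrable.sum _ hIe
    have heq : (∑ m ∈ Finset.range ((k - 1) / 2 + 1), fun s => f (s + 2 * m * a))
        = fun x => ∑ m ∈ Finset.range ((k - 1) / 2 + 1), f (x + 2 * m * a) := by
      ext x; simp
    rwa [heq] at h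
  have hB : IntervalIntegrable
      (fun x => ∑ m ∈ Finset.Icc 1 (k / 2), f (2 * m * a - x)) volume 0 a := by
    have h := IntervalIntegrable.sum _ hIo
    have heq : (∑ m ∈ Finset.Icc 1 (k / 2), fun s => f (2 * m * a - s))
        = fun x => ∑ m ∈ Finset.Icc 1 (k / 2), f (2 * m * a - x) := by
      ext x; simp
    rwa [heq] at h
  rw [← intervalIntegral.integral_add hA hB]
  -- a.e. vanishing
  have hdeg' : ∀ᵐ t : ℝ ∂volume, t ∈ Set.Ioo (0:ℝ) a →
      ∑ j ∈ Finset.range ((k - 1) / 2 + 1), W (2 * j * a + t) +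
        ∑ j ∈ Finset.Icc 1 (k / 2), W (2 * j * a - t) = 0 :=
    (ae_restrict_iff' measurableSet_Ioo).mp hdeg
  have hne : ∀ᵐ t : ℝ ∂volume, t ≠ a := by
    have : volume ({a} : Set ℝ) = 0 := measure_singleton a
    rw [Filter.eventually_iff]
    rw [show {t : ℝ | t ≠ a} = ({a} : Set ℝ)ᶜ from rfl]
    exact compl_mem_ae_iff.mpr this
  have key : ∀ t : ℝ,
      (∑ m ∈ Finset.range ((k - 1) / 2 + 1), f (t + 2 * m * a) +
        ∑ m ∈ Finset.Icc 1 (k / 2), f (2 * m * a - t))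
      = (∑ m ∈ Finset.range ((k - 1) / 2 + 1), W (2 * m * a + t) +
          ∑ m ∈ Finset.Icc 1 (k / 2), W (2 * m * a - t)) * Complex.cos ((k:ℂ) * n * t) := by
    intro t
    rw [add_mul, Finset.sum_mul, Finset.sum_mul]
    congr 1
    · apply Finset.sum_congr rfl
      intro m _
      show W (t + 2 * m * a) * Complex.cos ((k:ℂ) * n * ((t + 2 * m * a : ℝ):ℂ)) = _
      rw [hcos1 m t, show t + 2 * (m:ℝ) * a = 2 * m * a + t by ring]
    · apply Finset.sum_congr rfl
      intro m _
      show W (2 * m * a - t) * Complex.cos ((k:ℂ) * n * ((2 * m * a - t : ℝ):ℂ)) = _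
      rw [hcos2 m t]
  have : (∫ s in (0:ℝ)..a,
      (∑ m ∈ Finset.range ((k - 1) / 2 + 1), f (s + 2 * m * a) +
        ∑ m ∈ Finset.Icc 1 (k / 2), f (2 * m * a - s)))
      = ∫ s in (0:ℝ)..a, (0:ℂ) := by
    apply intervalIntegral.integral_congr_ae
    filter_upwards [hdeg', hne] with t hdegt hnet ht
    rw [Set.uIoc_of_le hapos.le] at ht
    have htIoo : t ∈ Set.Ioo (0:ℝ) a := ⟨ht.1, lt_of_le_of_ne ht.2 hnet⟩
    rw [key t, hdegt htIoo, zero_mul]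
  rw [this, intervalIntegral.integral_zero]
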